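/- arXiv:2106.13077 — 2 statements merged into one kernel-verified Lean document; each statement's English description precedes it below -/
import Mathlib

section
/- Let X be a real-valued stochastic process indexed by ℝ with continuous sample paths on a probability space (Ω, 𝔉, P), which is strictly stationary and satisfies the monotone-joint-exceedance assumption (Assumption 1) at level u. Fix S > 0, s̃ ∈ (0, S) and a threshold u ∈ ℝ, and for h ∈ [0, S − s̃] define μ(h) = P( sup_{s∈[h, s̃+h]} X(s) ≥ u and sup_{s∈[0,S]∖[h, s̃+h]} X(s) < u ). Then μ(h) is a decreasing function of the distance of the interval [h, s̃+h] to the boundary of [0,S]: for all h₁, h₂ ∈ [0, S − s̃], if min(h₁, S − s̃ − h₁) ≤ min(h₂, S − s̃ − h₂) then μ(h₁) ≥ μ(h₂). -/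
open MeasureTheory

/-- The infimum of distances between points of two subsets of `ℝ`. -/
noncomputable def setDist (A B : Set ℝ) : ℝ :=
  sInf (Set.image2 dist A B)

section BoundaryAux
open Set

variable {f : ℝ → ℝ} {u a b : ℝ}

private lemma sup_dense (hf : Continuous f) {A B : Set ℝ} (hA : A.Nonempty) (hAB : A ⊆ B)
    (hBA : B ⊆ closure A) (hB : BddAbove (f '' B)) : sSup (f '' A) = sSup (f '' B) := by
  apply le_antisymm
  · exact csSup_le_csSup hB (hA.image f) (image_mono hAB)
  · apply csSup_le ((hA.mono hAB).image f)
    rintro y ⟨x, hxB, rfl⟩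
    have hx : f x ∈ f '' closure A := ⟨x, hBA hxB, rfl⟩
    have hsub : f '' A ⊆ Iic (sSup (f '' A)) :=
      fun y hy => le_csSup (hB.mono (image_mono hAB)) hy
    exact closure_minimal hsub isClosed_Iic (image_closure_subset_closure_image hf hx)

private lemma le_sup_iff' {K : Set ℝ} (hK : IsCompact K) (hne : K.Nonempty) (hf : Continuous f) :
    u ≤ sSup (f '' K) ↔ ∃ x ∈ K, u ≤ f x := by
  obtain ⟨x, hxK, hmax⟩ := hK.exists_isMaxOn hne hf.continuousOn
  have hsup : sSup (f '' K) = f x := le_antisymm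
    (csSup_le (hne.image f) (by rintro y ⟨z, hz, rfl⟩; exact hmax hz))
    (le_csSup (hK.image hf).bddAbove ⟨x, hxK, rfl⟩)
  constructor
  · intro h; exact ⟨x, hxK, hsup ▸ h⟩
  · rintro ⟨z, hz, hzu⟩
    exact hzu.trans (le_csSup (hK.image hf).bddAbove ⟨z, hz, rfl⟩)

private lemma sup_lt_iff' {K : Set ℝ} (hK : IsCompact K) (hne : K.Nonempty) (hf : Continuous f) :
    sSup (f '' K) < u ↔ ∀ x ∈ K, f x < u := by
  rw [← not_le, le_sup_iff' hK hne hf]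
  push_neg
  rfl

/-- countable dense subset of `Icc a b`. -/
private def Cab (a b : ℝ) : Set ℝ := Set.range (fun q : ℚ => max a (min b (q : ℝ)))

private lemma Cab_countable : (Cab a b).Countable := countable_range _

private lemma Cab_subset (hab : a ≤ b) : Cab a b ⊆ Icc a b := by
  rintro x ⟨q, rfl⟩
  exact ⟨le_max_left _ _, max_le hab (min_le_left _ _)⟩

private lemma Cab_nonempty : (Cab a b).Nonempty := ⟨_, 0, rfl⟩

private lemma Cab_dense (hab : a ≤ b) : Icc a b ⊆ closure (Cab a b) := by
  intro x hx
  have hg : Continuous (fun r : ℝ => max a (min b r)) :=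
    continuous_const.max (continuous_const.min continuous_id)
  have hx' : x = max a (min b x) := by
    rw [min_eq_right hx.2, max_eq_right hx.1]
  have hxc : x ∈ (fun r : ℝ => max a (min b r)) '' closure (Set.range ((↑) : ℚ → ℝ)) := by
    refine ⟨x, ?_, hx'.symm⟩
    rw [Rat.denseRange_cast.closure_eq]
    trivial
  have h2 := image_closure_subset_closure_image hg hxc
  have himg : (fun r : ℝ => max a (min b r)) '' Set.range ((↑) : ℚ → ℝ) = Cab a b := by
    rw [← Set.range_comp]; rfl
  rwa [himg] at h2

/-- Path-space version of the exceedance event, with countable skeleton. -/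
private def ExS (u a b : ℝ) : Set (ℝ → ℝ) :=
  ⋂ n : ℕ, ⋃ q ∈ Cab a b, {f | u - 1 / (n + 1) < f q}

private lemma measurableSet_ExS : MeasurableSet (ExS u a b) := by
  refine MeasurableSet.iInter fun n => MeasurableSet.biUnion Cab_countable fun q _ => ?_
  exact measurableSet_lt measurable_const (measurable_pi_apply q)

private lemma sup_Cab (hf : Continuous f) (hab : a ≤ b) :
    sSup (f '' Cab a b) = sSup (f '' Icc a b) :=
  sup_dense hf Cab_nonempty (Cab_subset hab) (Cab_dense hab)
    (isCompact_Icc.image hf).bddAbove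

private lemma mem_ExS (hf : Continuous f) (hab : a ≤ b) :
    f ∈ ExS u a b ↔ u ≤ sSup (f '' Icc a b) := by
  simp only [ExS, mem_iInter, mem_iUnion, mem_setOf_eq]
  constructor
  · intro h
    refine le_of_forall_pos_le_add fun ε hε => ?_
    obtain ⟨n, hn⟩ := exists_nat_one_div_lt (K := ℝ) hε
    obtain ⟨q, hq, hlt⟩ := h n
    have h1 : f q ≤ sSup (f '' Icc a b) :=
      le_csSup (isCompact_Icc.image hf).bddAbove ⟨q, Cab_subset hab hq, rfl⟩
    have h2 : u - 1 / (n + 1) < sSup (f '' Icc a b) := lt_of_lt_of_le hlt h1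
    nlinarith [hn]
  · intro h n
    have h2 : u - 1 / (n + 1) < sSup (f '' Cab a b) := by
      rw [sup_Cab hf hab]
      have : (0:ℝ) < 1 / (n + 1) := by positivity
      linarith
    obtain ⟨y, ⟨q, hq, rfl⟩, hy⟩ := exists_lt_of_lt_csSup (Cab_nonempty.image f) h2
    exact ⟨q, hq, hy⟩

private lemma not_mem_ExS (hf : Continuous f) (hab : a ≤ b) :
    f ∉ ExS u a b ↔ ∀ x ∈ Icc a b, f x < u := by
  rw [mem_ExS hf hab, not_le, sup_lt_iff' isCompact_Icc (nonempty_Icc.2 hab) hf]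

private lemma forall_Icc_split {g : ℝ → ℝ} {u c m d : ℝ} (hcm : c ≤ m) (hmd : m ≤ d) :
    (∀ s ∈ Icc c d, g s < u) ↔ (∀ s ∈ Icc c m, g s < u) ∧ (∀ s ∈ Icc m d, g s < u) := by
  constructor
  · intro hall
    exact ⟨fun s hs => hall s ⟨hs.1, hs.2.trans hmd⟩, fun s hs => hall s ⟨hcm.trans hs.1, hs.2⟩⟩
  · rintro ⟨h1, h2⟩ s hs
    rcases le_total s m with hsm | hsm
    · exact h1 s ⟨hs.1, hsm⟩
    · exact h2 s ⟨hsm, hs.2⟩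

section dist
variable {c d : ℝ}

private lemma setDist_bddBelow {A B : Set ℝ} : BddBelow (Set.image2 dist A B) :=
  ⟨0, by rintro r ⟨x, hx, y, hy, rfl⟩; exact dist_nonneg⟩

private lemma setDist_Icc_right (hab : a ≤ b) (hcd : c ≤ d) (hbc : b ≤ c) :
    setDist (Icc a b) (Icc c d) = c - b := by
  apply le_antisymm
  · have hm : dist b c ∈ Set.image2 dist (Icc a b) (Icc c d) :=
      Set.mem_image2_of_mem ⟨hab, le_refl b⟩ ⟨le_refl c, hcd⟩
    have h2 : dist b c = c - b := by rw [Real.dist_eq, abs_of_nonpos (by linarith)]; ring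
    exact h2 ▸ csInf_le setDist_bddBelow hm
  · refine le_csInf ⟨dist b c, Set.mem_image2_of_mem (⟨hab, le_refl b⟩ : b ∈ Icc a b)
      (⟨le_refl c, hcd⟩ : c ∈ Icc c d)⟩ ?_
    rintro r ⟨x, hx, y, hy, rfl⟩
    rw [Real.dist_eq]
    have h3 : y - x ≤ |x - y| := by rw [abs_sub_comm]; exact le_abs_self _
    have hx2 := hx.2; have hy1 := hy.1
    linarith

private lemma setDist_Icc_left (hab : a ≤ b) (hcd : c ≤ d) (hda : d ≤ a) :
    setDist (Icc a b) (Icc c d) = a - d := by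
  apply le_antisymm
  · have hm : dist a d ∈ Set.image2 dist (Icc a b) (Icc c d) :=
      Set.mem_image2_of_mem ⟨le_refl a, hab⟩ ⟨hcd, le_refl d⟩
    have h2 : dist a d = a - d := by rw [Real.dist_eq, abs_of_nonneg (by linarith)]
    exact h2 ▸ csInf_le setDist_bddBelow hm
  · refine le_csInf ⟨dist a d, Set.mem_image2_of_mem (⟨le_refl a, hab⟩ : a ∈ Icc a b)
      (⟨hcd, le_refl d⟩ : d ∈ Icc c d)⟩ ?_
    rintro r ⟨x, hx, y, hy, rfl⟩
    rw [Real.dist_eq]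
    have h3 : x - y ≤ |x - y| := le_abs_self _
    have hx1 := hx.1; have hy2 := hy.2
    linarith

end dist

section Dset
variable {S st h : ℝ}

private lemma Dset_zero (hf : Continuous f) (hst0 : 0 < st) (hstS : st < S) :
    sSup (f '' (Icc 0 S \ Icc 0 st)) < u ↔ ∀ x ∈ Icc st S, f x < u := by
  have hD : Icc 0 S \ Icc 0 st = Ioc st S := by
    ext x
    simp only [mem_diff, mem_Icc, mem_Ioc, not_and, not_le]
    constructor
    · rintro ⟨⟨h0, hS⟩, hn⟩; exact ⟨hn h0, hS⟩
    · rintro ⟨h1, h2⟩; exact ⟨⟨by linarith, h2⟩, fun _ => h1⟩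
  rw [hD, sup_dense hf (nonempty_Ioc.2 hstS) Ioc_subset_Icc_self
    (by rw [closure_Ioc (ne_of_lt hstS)]) (isCompact_Icc.image hf).bddAbove,
    sup_lt_iff' isCompact_Icc (nonempty_Icc.2 (le_of_lt hstS)) hf]

private lemma Dset_top (hf : Continuous f) (hst0 : 0 < st) (hstS : st < S) :
    sSup (f '' (Icc 0 S \ Icc (S - st) S)) < u ↔ ∀ x ∈ Icc 0 (S - st), f x < u := by
  have hL : (0:ℝ) < S - st := by linarith
  have hD : Icc 0 S \ Icc (S - st) S = Ico 0 (S - st) := by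
    ext x
    simp only [mem_diff, mem_Icc, mem_Ico, not_and, not_le]
    constructor
    · rintro ⟨⟨h0, hS⟩, hn⟩
      refine ⟨h0, ?_⟩
      by_contra hc
      push_neg at hc
      exact absurd hS (not_le.2 (hn hc))
    · rintro ⟨h1, h2⟩; exact ⟨⟨h1, by linarith⟩, fun hc => absurd h2 (not_lt.2 hc)⟩
  rw [hD, sup_dense hf (nonempty_Ico.2 hL) Ico_subset_Icc_self
    (by rw [closure_Ico (ne_of_lt hL)]) (isCompact_Icc.image hf).bddAbove,
    sup_lt_iff' isCompact_Icc (nonempty_Icc.2 (le_of_lt hL)) hf]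

private lemma Dset_mid (hf : Continuous f) (hst0 : 0 < st) (h0 : 0 < h) (hS : st + h < S) :
    sSup (f '' (Icc 0 S \ Icc h (st + h))) < u ↔
      (∀ x ∈ Icc 0 h, f x < u) ∧ ∀ x ∈ Icc (st + h) S, f x < u := by
  have hD : Icc 0 S \ Icc h (st + h) = Ico 0 h ∪ Ioc (st + h) S := by
    ext x
    simp only [mem_diff, mem_Icc, mem_union, mem_Ico, mem_Ioc, not_and, not_le]
    constructor
    · rintro ⟨⟨hx0, hxS⟩, hn⟩
      rcases lt_or_ge x h with hc | hc
      · exact Or.inl ⟨hx0, hc⟩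
      · exact Or.inr ⟨hn hc, hxS⟩
    · rintro (⟨h1, h2⟩ | ⟨h1, h2⟩)
      · exact ⟨⟨h1, by linarith⟩, fun hc => absurd h2 (not_lt.2 hc)⟩
      · exact ⟨⟨by linarith, h2⟩, fun _ => h1⟩
  have hB : IsCompact (Icc 0 h ∪ Icc (st + h) S) := isCompact_Icc.union isCompact_Icc
  have hBne : (Icc 0 h ∪ Icc (st + h) S).Nonempty :=
    (nonempty_Icc.2 (le_of_lt h0)).mono subset_union_left
  rw [hD, sup_dense hf (Nonempty.mono subset_union_left (nonempty_Ico.2 h0))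
      (union_subset_union Ico_subset_Icc_self Ioc_subset_Icc_self) ?_ (hB.image hf).bddAbove,
    sup_lt_iff' hB hBne hf]
  · constructor
    · intro hall
      exact ⟨fun x hx => hall x (Or.inl hx), fun x hx => hall x (Or.inr hx)⟩
    · rintro ⟨hl, hr⟩ x (hx | hx)
      · exact hl x hx
      · exact hr x hx
  · intro x hx
    rcases hx with hx | hx
    · exact closure_mono subset_union_left (by rw [closure_Ico (ne_of_lt h0)]; exact hx)
    · exact closure_mono subset_union_right
        (by rw [closure_Ioc (ne_of_lt (by linarith : st + h < S))]; exact hx)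

end Dset

/-- Exceedance event in `Ω`. -/
private def Eev {Ω : Type*} (X : Ω → ℝ → ℝ) (u a b : ℝ) : Set Ω :=
  {ω | u ≤ sSup (X ω '' Set.Icc a b)}

/-- Non-exceedance event in `Ω`. -/
private def Nev {Ω : Type*} (X : Ω → ℝ → ℝ) (u a b : ℝ) : Set Ω :=
  {ω | ∀ s ∈ Set.Icc a b, X ω s < u}

/-- Normalized window event. -/
private def Wev {Ω : Type*} (X : Ω → ℝ → ℝ) (u st a b : ℝ) : Set Ω :=
  Eev X u 0 st ∩ Nev X u (-a) 0 ∩ Nev X u st (st + b)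

end BoundaryAux

/-- **Theorem 1 of the paper, `d = 1`.** Let `X` be a strictly stationary
real-valued process with continuous sample paths satisfying the monotone-joint-exceedance
assumption (Assumption 1) at level `u`: for every closed bounded interval `I = [a,b]`,
every event `H` of the form `{X < u on K}` with `K` a finite union of closed bounded
intervals, and all closed bounded intervals `J₁, J₂` of equal positive length, each
disjoint from the interior of `I`, with `dist(I, J₁) ≥ dist(I, J₂)`, one has
`P(sup_I X ≥ u, sup_{J₁} X ≥ u, H) ≤ P(sup_I X ≥ u, sup_{J₂} X ≥ u, H)`.
Fix `S > 0`, `s̃ ∈ (0, S)` and for `h ∈ [0, S − s̃]` set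
`μ(h) = P(sup_{[h, s̃+h]} X ≥ u, sup_{[0,S]∖[h, s̃+h]} X < u)`. Then `μ` is a decreasing
function of the distance of `[h, s̃+h]` to the boundary of `[0,S]`: if
`min(h₁, S−s̃−h₁) ≤ min(h₂, S−s̃−h₂)` then `μ(h₁) ≥ μ(h₂)`. -/
theorem boundary_effect_of_stationary_sup_exceedance
    {Ω : Type*} [MeasurableSpace Ω] (P : Measure Ω) [IsProbabilityMeasure P]
    (X : Ω → ℝ → ℝ)
    (hCont : ∀ ω, Continuous (X ω))
    (hMeas : ∀ s : ℝ, Measurable (fun ω => X ω s))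
    (hStat : ∀ t : ℝ,
      Measure.map (fun ω => fun s => X ω (s + t)) P = Measure.map (fun ω => X ω) P)
    (u : ℝ)
    (hAssump : ∀ a b : ℝ, a ≤ b → ∀ (n : ℕ) (c d : Fin n → ℝ), (∀ i, c i ≤ d i) →
      ∀ c₁ d₁ c₂ d₂ : ℝ, c₁ < d₁ → d₁ - c₁ = d₂ - c₂ →
      Disjoint (Set.Icc c₁ d₁) (interior (Set.Icc a b)) →
      Disjoint (Set.Icc c₂ d₂) (interior (Set.Icc a b)) →
      setDist (Set.Icc a b) (Set.Icc c₂ d₂) ≤ setDist (Set.Icc a b) (Set.Icc c₁ d₁) →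
      P {ω | u ≤ sSup (X ω '' Set.Icc a b) ∧ u ≤ sSup (X ω '' Set.Icc c₁ d₁) ∧
          ∀ i, ∀ s ∈ Set.Icc (c i) (d i), X ω s < u}
        ≤ P {ω | u ≤ sSup (X ω '' Set.Icc a b) ∧ u ≤ sSup (X ω '' Set.Icc c₂ d₂) ∧
            ∀ i, ∀ s ∈ Set.Icc (c i) (d i), X ω s < u})
    (S st : ℝ) (hS : 0 < S) (hst : st ∈ Set.Ioo 0 S) :
    ∀ h₁ ∈ Set.Icc (0 : ℝ) (S - st), ∀ h₂ ∈ Set.Icc (0 : ℝ) (S - st),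
      min h₁ (S - st - h₁) ≤ min h₂ (S - st - h₂) →
      P {ω | u ≤ sSup (X ω '' Set.Icc h₂ (st + h₂)) ∧
          sSup (X ω '' (Set.Icc 0 S \ Set.Icc h₂ (st + h₂))) < u}
        ≤ P {ω | u ≤ sSup (X ω '' Set.Icc h₁ (st + h₁)) ∧
            sSup (X ω '' (Set.Icc 0 S \ Set.Icc h₁ (st + h₁))) < u} := by
  obtain ⟨hst0, hstS⟩ := hst
  have hstle : (0:ℝ) ≤ st := hst0.le
  have hL0 : (0:ℝ) < S - st := by linarith
  -- measurability preliminaries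
  have hXm : Measurable (fun ω => X ω) := measurable_pi_iff.mpr hMeas
  have hXtm : ∀ t : ℝ, Measurable (fun ω => fun s => X ω (s + t)) :=
    fun t => measurable_pi_iff.mpr fun s => hMeas (s + t)
  have hTrans : ∀ (t : ℝ) (A : Set (ℝ → ℝ)), MeasurableSet A →
      P ((fun ω => fun s => X ω (s + t)) ⁻¹' A) = P ((fun ω => X ω) ⁻¹' A) := by
    intro t A hA
    rw [← Measure.map_apply (hXtm t) hA, ← Measure.map_apply hXm hA, hStat t]
  have hEmeas : ∀ a b : ℝ, a ≤ b → MeasurableSet (Eev X u a b) := by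
    intro a b hab
    have h1 : Eev X u a b = (fun ω => X ω) ⁻¹' ExS u a b := by
      ext ω
      simp only [Eev, Set.mem_setOf_eq, Set.mem_preimage]
      exact (mem_ExS (hCont ω) hab).symm
    rw [h1]
    exact hXm measurableSet_ExS
  have hNE : ∀ a b : ℝ, a ≤ b → Nev X u a b = (Eev X u a b)ᶜ := by
    intro a b hab
    ext ω
    simp only [Nev, Eev, Set.mem_compl_iff, Set.mem_setOf_eq]
    rw [not_le]
    exact (sup_lt_iff' isCompact_Icc (Set.nonempty_Icc.2 hab) (hCont ω)).symm
  have hsplitP : ∀ (T : Set Ω) (c d : ℝ), c ≤ d →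
      P (T ∩ Eev X u c d) + P (T ∩ Nev X u c d) = P T := by
    intro T c d hcd
    rw [hNE c d hcd, ← Set.diff_eq]
    exact measure_inter_add_diff T (hEmeas c d hcd)
  -- core monotone-rearrangement step
  have hcore : ∀ a b δ : ℝ, 0 ≤ a → 0 ≤ δ → δ ≤ b →
      (a ≤ b - δ → P (Wev X u st (a + δ) (b - δ)) ≤ P (Wev X u st a b)) ∧
      (b - δ ≤ a → P (Wev X u st a b) ≤ P (Wev X u st (a + δ) (b - δ))) := by
    intro a b δ ha0 hδ0 hδb
    rcases hδ0.eq_or_lt with rfl | hδpos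
    · constructor <;> intro _ <;> simp only [add_zero, sub_zero] <;> exact le_rfl
    · have hb0 : (0:ℝ) ≤ b - δ := by linarith
      set T : Set Ω := Eev X u 0 st ∩ (Nev X u (-a) 0 ∩ Nev X u st (st + b - δ)) with hT
      have hW1 : Wev X u st a b = T ∩ Nev X u (st + b - δ) (st + b) := by
        ext ω
        simp only [Wev, Eev, Nev, hT, Set.mem_inter_iff, Set.mem_setOf_eq]
        rw [forall_Icc_split (g := X ω) (u := u) (c := st) (m := st + b - δ) (d := st + b)
          (by linarith) (by linarith)]
        tauto
      have hW2 : Wev X u st (a + δ) (b - δ) = T ∩ Nev X u (-a - δ) (-a) := by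
        ext ω
        simp only [Wev, Eev, Nev, hT, Set.mem_inter_iff, Set.mem_setOf_eq]
        rw [show -(a + δ) = -a - δ from by ring, show st + (b - δ) = st + b - δ from by ring,
          forall_Icc_split (g := X ω) (u := u) (c := -a - δ) (m := -a) (d := 0)
          (by linarith) (by linarith)]
        tauto
      have e1 : P (T ∩ Eev X u (st + b - δ) (st + b)) + P (Wev X u st a b) = P T := by
        rw [hW1]; exact hsplitP T _ _ (by linarith)
      have e2 : P (T ∩ Eev X u (-a - δ) (-a)) + P (Wev X u st (a + δ) (b - δ)) = P T := by
        rw [hW2]; exact hsplitP T _ _ (by linarith)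
      have hsetJ : ∀ c₁ d₁ : ℝ,
          {ω | u ≤ sSup (X ω '' Set.Icc 0 st) ∧ u ≤ sSup (X ω '' Set.Icc c₁ d₁) ∧
            ∀ i, ∀ s ∈ Set.Icc (![-a, st] i) (![(0:ℝ), st + b - δ] i), X ω s < u}
            = T ∩ Eev X u c₁ d₁ := by
        intro c₁ d₁
        ext ω
        simp only [hT, Eev, Nev, Set.mem_inter_iff, Set.mem_setOf_eq, Fin.forall_fin_two,
          Matrix.cons_val_zero, Matrix.cons_val_one, Matrix.head_cons]
        tauto
      have hcd2 : ∀ i : Fin 2, (![-a, st] i) ≤ (![(0:ℝ), st + b - δ] i) := by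
        intro i
        fin_cases i
        · simpa using by linarith
        · simpa using by linarith
      have hdisjL : Disjoint (Set.Icc (-a - δ) (-a)) (interior (Set.Icc 0 st)) := by
        rw [interior_Icc]
        refine Set.disjoint_left.mpr fun x hx hx' => ?_
        have := hx.2; have := hx'.1; linarith
      have hdisjR : Disjoint (Set.Icc (st + b - δ) (st + b)) (interior (Set.Icc 0 st)) := by
        rw [interior_Icc]
        refine Set.disjoint_left.mpr fun x hx hx' => ?_
        have := hx.1; have := hx'.2; linarith
      have hdL : setDist (Set.Icc 0 st) (Set.Icc (-a - δ) (-a)) = a := by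
        rw [setDist_Icc_left hstle (by linarith) (by linarith)]; ring
      have hdR : setDist (Set.Icc 0 st) (Set.Icc (st + b - δ) (st + b)) = b - δ := by
        rw [setDist_Icc_right hstle (by linarith) (by linarith)]; ring
      constructor
      · intro hab
        have happ := hAssump 0 st hstle 2 ![-a, st] ![(0:ℝ), st + b - δ] hcd2
          (st + b - δ) (st + b) (-a - δ) (-a) (by linarith) (by ring) hdisjR hdisjL
          (by rw [hdL, hdR]; linarith)
        rw [hsetJ, hsetJ] at happ
        have hne : P (T ∩ Eev X u (-a - δ) (-a)) ≠ ⊤ := measure_ne_top P _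
        refine (ENNReal.add_le_add_iff_left hne).mp ?_
        calc P (T ∩ Eev X u (-a - δ) (-a)) + P (Wev X u st (a + δ) (b - δ)) = P T := e2
          _ = P (T ∩ Eev X u (st + b - δ) (st + b)) + P (Wev X u st a b) := e1.symm
          _ ≤ P (T ∩ Eev X u (-a - δ) (-a)) + P (Wev X u st a b) := add_le_add happ le_rfl
      · intro hab
        have happ := hAssump 0 st hstle 2 ![-a, st] ![(0:ℝ), st + b - δ] hcd2
          (-a - δ) (-a) (st + b - δ) (st + b) (by linarith) (by ring) hdisjL hdisjR
          (by rw [hdL, hdR]; linarith)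
        rw [hsetJ, hsetJ] at happ
        have hne : P (T ∩ Eev X u (st + b - δ) (st + b)) ≠ ⊤ := measure_ne_top P _
        refine (ENNReal.add_le_add_iff_left hne).mp ?_
        calc P (T ∩ Eev X u (st + b - δ) (st + b)) + P (Wev X u st a b) = P T := e1
          _ = P (T ∩ Eev X u (-a - δ) (-a)) + P (Wev X u st (a + δ) (b - δ)) := e2.symm
          _ ≤ P (T ∩ Eev X u (st + b - δ) (st + b)) + P (Wev X u st (a + δ) (b - δ)) :=
              add_le_add happ le_rfl
  -- continuity of shifted paths and image identities
  have hgcont : ∀ (ω : Ω) (t : ℝ), Continuous (fun s => X ω (s + t)) :=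
    fun ω t => (hCont ω).comp (continuous_add_right t)
  have himg : ∀ (ω : Ω) (t a b : ℝ),
      (fun s => X ω (s + t)) '' Set.Icc a b = X ω '' Set.Icc (a + t) (b + t) := by
    intro ω t a b
    rw [show (fun s => X ω (s + t)) = X ω ∘ (fun s => s + t) from rfl, Set.image_comp,
      Set.image_add_const_Icc]
  have hmemShift : ∀ (ω : Ω) (t a b : ℝ), a ≤ b →
      ((fun s => X ω (s + t)) ∈ ExS u a b ↔ u ≤ sSup (X ω '' Set.Icc (a + t) (b + t))) := by
    intro ω t a b hab
    rw [mem_ExS (hgcont ω t) hab, himg ω t a b]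
  have hsupall : ∀ (ω : Ω) (a b : ℝ), a ≤ b →
      (sSup (X ω '' Set.Icc a b) < u ↔ ∀ x ∈ Set.Icc a b, X ω x < u) :=
    fun ω a b hab => sup_lt_iff' isCompact_Icc (Set.nonempty_Icc.2 hab) (hCont ω)
  -- the three representations of μ(h)
  have Hzero : {ω | u ≤ sSup (X ω '' Set.Icc 0 st) ∧
      sSup (X ω '' (Set.Icc 0 S \ Set.Icc 0 st)) < u}
      = Eev X u 0 st ∩ Nev X u st S := by
    ext ω
    simp only [Eev, Nev, Set.mem_inter_iff, Set.mem_setOf_eq]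
    rw [Dset_zero (hCont ω) hst0 hstS]
  have Htop : P {ω | u ≤ sSup (X ω '' Set.Icc (S - st) S) ∧
      sSup (X ω '' (Set.Icc 0 S \ Set.Icc (S - st) S)) < u}
      = P (Eev X u 0 st ∩ Nev X u (-(S - st)) 0) := by
    set A : Set (ℝ → ℝ) := ExS u 0 st ∩ (ExS u (-(S - st)) 0)ᶜ with hA
    have hAmeas : MeasurableSet A := measurableSet_ExS.inter measurableSet_ExS.compl
    have h1 : {ω | u ≤ sSup (X ω '' Set.Icc (S - st) S) ∧
        sSup (X ω '' (Set.Icc 0 S \ Set.Icc (S - st) S)) < u}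
        = (fun ω => fun s => X ω (s + (S - st))) ⁻¹' A := by
      ext ω
      simp only [hA, Set.mem_preimage, Set.mem_inter_iff, Set.mem_compl_iff, Set.mem_setOf_eq]
      rw [Dset_top (hCont ω) hst0 hstS,
        hmemShift ω (S - st) 0 st hstle,
        hmemShift ω (S - st) (-(S - st)) 0 (by linarith)]
      rw [show (0:ℝ) + (S - st) = S - st from by ring, show st + (S - st) = S from by ring,
        show -(S - st) + (S - st) = 0 from by ring]
      rw [not_le, hsupall ω 0 (S - st) hL0.le]
    have h2 : Eev X u 0 st ∩ Nev X u (-(S - st)) 0 = (fun ω => X ω) ⁻¹' A := by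
      ext ω
      simp only [hA, Eev, Nev, Set.mem_preimage, Set.mem_inter_iff, Set.mem_compl_iff,
        Set.mem_setOf_eq]
      rw [mem_ExS (hCont ω) hstle, not_mem_ExS (hCont ω) (by linarith : -(S - st) ≤ 0)]
    rw [h1, h2]
    exact hTrans (S - st) A hAmeas
  have Hmid : ∀ h : ℝ, 0 < h → h < S - st →
      P {ω | u ≤ sSup (X ω '' Set.Icc h (st + h)) ∧
          sSup (X ω '' (Set.Icc 0 S \ Set.Icc h (st + h))) < u}
        = P (Wev X u st h (S - st - h)) := by
    intro h h0 hhL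
    set A : Set (ℝ → ℝ) :=
      ExS u 0 st ∩ ((ExS u (-h) 0)ᶜ ∩ (ExS u st (st + (S - st - h)))ᶜ) with hA
    have hAmeas : MeasurableSet A :=
      measurableSet_ExS.inter (measurableSet_ExS.compl.inter measurableSet_ExS.compl)
    have h1 : {ω | u ≤ sSup (X ω '' Set.Icc h (st + h)) ∧
        sSup (X ω '' (Set.Icc 0 S \ Set.Icc h (st + h))) < u}
        = (fun ω => fun s => X ω (s + h)) ⁻¹' A := by
      ext ω
      simp only [hA, Set.mem_preimage, Set.mem_inter_iff, Set.mem_compl_iff, Set.mem_setOf_eq]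
      rw [Dset_mid (hCont ω) hst0 h0 (by linarith),
        hmemShift ω h 0 st hstle,
        hmemShift ω h (-h) 0 (by linarith),
        hmemShift ω h st (st + (S - st - h)) (by linarith)]
      rw [show (0:ℝ) + h = h from by ring, show -h + h = 0 from by ring,
        show st + (S - st - h) + h = S from by ring]
      rw [not_le, not_le, hsupall ω 0 h h0.le, hsupall ω (st + h) S (by linarith)]
    have h2 : Wev X u st h (S - st - h) = (fun ω => X ω) ⁻¹' A := by
      ext ω
      simp only [hA, Wev, Eev, Nev, Set.mem_preimage, Set.mem_inter_iff, Set.mem_compl_iff,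
        Set.mem_setOf_eq]
      rw [mem_ExS (hCont ω) hstle, not_mem_ExS (hCont ω) (by linarith : -h ≤ 0),
        not_mem_ExS (hCont ω) (by linarith : st ≤ st + (S - st - h))]
      tauto
    rw [h1, h2]
    exact hTrans h A hAmeas
  -- comparisons with the boundary cases
  have hWVR : ∀ a b : ℝ, 0 ≤ a → 0 ≤ b → a + b = S - st →
      P (Wev X u st a b) ≤ P (Eev X u 0 st ∩ Nev X u st S) := by
    intro a b ha hb hab
    have h1 := (hcore 0 (S - st) a le_rfl ha (by linarith)).1 (by linarith)
    rw [show (0:ℝ) + a = a from by ring, show S - st - a = b from by linarith] at h1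
    refine h1.trans (measure_mono ?_)
    intro ω hω
    simp only [Wev, Set.mem_inter_iff] at hω
    obtain ⟨⟨hE, _⟩, hN⟩ := hω
    refine ⟨hE, ?_⟩
    intro s hs
    exact hN s ⟨hs.1, by linarith [hs.2]⟩
  have hWVL : ∀ a b : ℝ, 0 ≤ a → 0 ≤ b → a + b = S - st →
      P (Wev X u st a b) ≤ P (Eev X u 0 st ∩ Nev X u (-(S - st)) 0) := by
    intro a b ha hb hab
    have h1 := (hcore a b b ha hb le_rfl).2 (by linarith)
    rw [show a + b = S - st from hab, show b - b = 0 from by ring] at h1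
    refine h1.trans (measure_mono ?_)
    intro ω hω
    simp only [Wev, Set.mem_inter_iff] at hω
    obtain ⟨⟨hE, hN⟩, _⟩ := hω
    exact ⟨hE, hN⟩
  have hVRL : P (Eev X u 0 st ∩ Nev X u st S) = P (Eev X u 0 st ∩ Nev X u (-(S - st)) 0) := by
    have hsetJ0 : ∀ c₁ d₁ : ℝ,
        {ω | u ≤ sSup (X ω '' Set.Icc 0 st) ∧ u ≤ sSup (X ω '' Set.Icc c₁ d₁) ∧
          ∀ i, ∀ s ∈ Set.Icc ((![] : Fin 0 → ℝ) i) ((![] : Fin 0 → ℝ) i), X ω s < u}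
          = Eev X u 0 st ∩ Eev X u c₁ d₁ := by
      intro c₁ d₁
      ext ω
      simp [Eev, Set.mem_inter_iff, IsEmpty.forall_iff]
    have hcd0 : ∀ i : Fin 0, (![] : Fin 0 → ℝ) i ≤ (![] : Fin 0 → ℝ) i := fun i => i.elim0
    have hd1 : setDist (Set.Icc 0 st) (Set.Icc st S) = 0 := by
      rw [setDist_Icc_right hstle (by linarith) le_rfl]; ring
    have hd2 : setDist (Set.Icc 0 st) (Set.Icc (-(S - st)) 0) = 0 := by
      rw [setDist_Icc_left hstle (by linarith) le_rfl]; ring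
    have hdisj1 : Disjoint (Set.Icc st S) (interior (Set.Icc 0 st)) := by
      rw [interior_Icc]
      refine Set.disjoint_left.mpr fun x hx hx' => ?_
      have := hx.1; have := hx'.2; linarith
    have hdisj2 : Disjoint (Set.Icc (-(S - st)) 0) (interior (Set.Icc 0 st)) := by
      rw [interior_Icc]
      refine Set.disjoint_left.mpr fun x hx hx' => ?_
      have := hx.2; have := hx'.1; linarith
    have happ1 := hAssump 0 st hstle 0 ![] ![] hcd0 st S (-(S - st)) 0 hstS (by ring)
      hdisj1 hdisj2 (by rw [hd1, hd2])
    have happ2 := hAssump 0 st hstle 0 ![] ![] hcd0 (-(S - st)) 0 st S (by linarith) (by ring)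
      hdisj2 hdisj1 (by rw [hd1, hd2])
    rw [hsetJ0, hsetJ0] at happ1
    rw [hsetJ0, hsetJ0] at happ2
    have heq : P (Eev X u 0 st ∩ Eev X u st S)
        = P (Eev X u 0 st ∩ Eev X u (-(S - st)) 0) := le_antisymm happ1 happ2
    have e1 := hsplitP (Eev X u 0 st) st S (by linarith)
    have e2 := hsplitP (Eev X u 0 st) (-(S - st)) 0 (by linarith)
    rw [heq] at e1
    have := e1.trans e2.symm
    exact (ENNReal.add_right_inj (measure_ne_top P _)).mp this
  -- final assembly
  intro h₁ hh₁ h₂ hh₂ hmin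
  obtain ⟨h10, h1L⟩ := hh₁
  obtain ⟨h20, h2L⟩ := hh₂
  have hstS' : st + (S - st) = S := by ring
  have h1cases : min h₁ (S - st - h₁) ≤ 0 → h₁ = 0 ∨ h₁ = S - st := by
    intro hm
    rcases le_total h₁ (S - st - h₁) with hc | hc
    · left; rw [min_eq_left hc] at hm; linarith
    · right; rw [min_eq_right hc] at hm; linarith
  rcases h20.eq_or_lt with h2z | h2pos
  · -- h₂ = 0
    rw [← h2z] at hmin ⊢
    simp only [add_zero]
    rw [Hzero]
    have hm0 : min h₁ (S - st - h₁) ≤ 0 := by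
      rw [sub_zero] at hmin
      exact hmin.trans (min_le_left 0 (S - st))
    rcases h1cases hm0 with rfl | rfl
    · simp only [add_zero]
      rw [Hzero]
    · rw [hstS', Htop, hVRL]
  · rcases h2L.lt_or_eq with h2lt | h2eq
    · -- interior h₂
      rw [Hmid h₂ h2pos h2lt]
      rcases h10.eq_or_lt with h1z | h1pos
      · rw [← h1z]
        simp only [add_zero]
        rw [Hzero]
        exact hWVR h₂ (S - st - h₂) h2pos.le (by linarith) (by ring)
      · rcases h1L.lt_or_eq with h1lt | h1eq
        · rw [Hmid h₁ h1pos h1lt]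
          -- monotone rearrangement between two interior positions
          rcases le_total h₁ (S - st - h₁) with hcase | hcase
          · have hma : min h₁ (S - st - h₁) = h₁ := min_eq_left hcase
            have ha1 : h₁ ≤ h₂ := by
              calc h₁ = min h₁ (S - st - h₁) := hma.symm
                _ ≤ min h₂ (S - st - h₂) := hmin
                _ ≤ h₂ := min_le_left _ _
            have ha2 : h₁ ≤ S - st - h₂ := by
              calc h₁ = min h₁ (S - st - h₁) := hma.symm
                _ ≤ min h₂ (S - st - h₂) := hmin
                _ ≤ S - st - h₂ := min_le_right _ _
            have h3 := (hcore h₁ (S - st - h₁) (h₂ - h₁) h1pos.le (by linarith)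
              (by linarith)).1 (by linarith)
            rwa [show h₁ + (h₂ - h₁) = h₂ from by ring,
              show S - st - h₁ - (h₂ - h₁) = S - st - h₂ from by ring] at h3
          · have hmb : min h₁ (S - st - h₁) = S - st - h₁ := min_eq_right hcase
            have ha1 : S - st - h₁ ≤ S - st - h₂ := by
              calc S - st - h₁ = min h₁ (S - st - h₁) := hmb.symm
                _ ≤ min h₂ (S - st - h₂) := hmin
                _ ≤ S - st - h₂ := min_le_right _ _
            have ha2 : S - st - h₁ ≤ h₂ := by
              calc S - st - h₁ = min h₁ (S - st - h₁) := hmb.symm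
                _ ≤ min h₂ (S - st - h₂) := hmin
                _ ≤ h₂ := min_le_left _ _
            have h3 := (hcore h₂ (S - st - h₂) ((S - st - h₂) - (S - st - h₁)) h2pos.le
              (by linarith) (by linarith)).2 (by linarith)
            rwa [show h₂ + ((S - st - h₂) - (S - st - h₁)) = h₁ from by linarith,
              show (S - st - h₂) - ((S - st - h₂) - (S - st - h₁)) = S - st - h₁ from by ring]
              at h3
        · rw [h1eq, hstS', Htop]
          exact hWVL h₂ (S - st - h₂) h2pos.le (by linarith) (by ring)
    · -- h₂ = S - st
      rw [h2eq, hstS', Htop]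
      have hm0 : min h₁ (S - st - h₁) ≤ 0 := by
        rw [h2eq] at hmin
        have h4 := hmin.trans (min_le_right (S - st) (S - st - (S - st)))
        linarith
      rcases h1cases hm0 with rfl | rfl
      · simp only [add_zero]
        rw [Hzero, ← hVRL]
      · rw [hstS', Htop]
end

section
/- Let X be a real-valued stochastic process indexed by ℝ with continuous sample paths on a probability space (Ω, 𝔉, P), strictly stationary. Fix S > 0, s̃ ∈ (0, S), u ∈ ℝ, and let 0 < h, 0 < h' with h + h' ≤ S − s̃. For g ∈ [0, S − s̃] define μ(g) = P( sup_{s∈[g, s̃+g]} X(s) ≥ u and sup_{s∈[0,S]∖[g, s̃+g]} X(s) < u ). Then μ(h+h') − μ(h) = P( sup_{s∈[h, s̃+h]} X(s) ≥ u, sup_{s∈[S−h', S]} X(s) ≥ u, sup_{s∈[0, S−h']∖[h, s̃+h]} X(s) < u ) − P( sup_{s∈[h, s̃+h]} X(s) ≥ u, sup_{s∈[−h', 0]} X(s) ≥ u, sup_{s∈[0, S−h']∖[h, s̃+h]} X(s) < u ). -/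
open MeasureTheory Set

section StatWindowAux

private lemma le_csSup_closure' {s : Set ℝ} {a : ℝ} (hb : BddAbove s) (ha : a ∈ closure s) :
    a ≤ sSup s :=
  closure_minimal (fun _ hx => le_csSup hb hx) isClosed_Iic ha

private lemma sSup_image_dense' {f : ℝ → ℝ} (hf : Continuous f) {c s : Set ℝ}
    (hcs : c ⊆ s) (hsc : s ⊆ closure c) (hc : c.Nonempty) (hb : BddAbove (f '' s)) :
    sSup (f '' c) = sSup (f '' s) := by
  refine le_antisymm (csSup_le_csSup hb (hc.image f) (image_mono (f := f) hcs)) ?_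
  refine csSup_le ((hc.mono hcs).image f) ?_
  rintro y ⟨x, hx, rfl⟩
  exact le_csSup_closure' (hb.mono (image_mono (f := f) hcs))
    (image_closure_subset_closure_image hf ⟨x, hsc hx, rfl⟩)

private lemma bddAbove_image_Icc' {f : ℝ → ℝ} (hf : Continuous f) {s : Set ℝ} {a b : ℝ}
    (hs : s ⊆ Icc a b) : BddAbove (f '' s) :=
  ((isCompact_Icc.image hf).bddAbove).mono (image_mono (f := f) hs)

private lemma sSup_image_union' {f : ℝ → ℝ} {s t : Set ℝ} (hs : s.Nonempty) (ht : t.Nonempty)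
    (hbs : BddAbove (f '' s)) (hbt : BddAbove (f '' t)) :
    sSup (f '' (s ∪ t)) = sSup (f '' s) ⊔ sSup (f '' t) := by
  rw [image_union]
  exact csSup_union hbs (hs.image f) hbt (ht.image f)

private lemma img_add_Icc' (a b c : ℝ) : (fun x => x + c) '' Icc a b = Icc (a + c) (b + c) := by
  ext x
  simp only [mem_image, mem_Icc]
  constructor
  · rintro ⟨y, ⟨h1, h2⟩, rfl⟩
    exact ⟨by linarith, by linarith⟩
  · rintro ⟨h1, h2⟩
    exact ⟨x - c, ⟨by linarith, by linarith⟩, by ring⟩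

/-- dense countable enumeration of a nonempty subset of ℝ -/
private lemma exists_dense_seq' {s : Set ℝ} {a b : ℝ} (hs : s ⊆ Icc a b) (hne : s.Nonempty) :
    ∃ e : ℕ → ℝ, range e ⊆ s ∧ s ⊆ closure (range e) := by
  obtain ⟨c, hcs, hcount, hdense⟩ :=
    (TopologicalSpace.IsSeparable.of_separableSpace s).exists_countable_dense_subset
  have hcne : c.Nonempty := closure_nonempty_iff.mp (hne.mono hdense)
  obtain ⟨e, he⟩ := Set.Countable.exists_eq_range hcount hcne
  exact ⟨e, he ▸ hcs, he ▸ hdense⟩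

/-- key evaluation: iSup over dense sequence equals sSup over the set -/
private lemma iSup_eq_sSup_image' {f : ℝ → ℝ} (hf : Continuous f) {s : Set ℝ} {a b : ℝ}
    (hs : s ⊆ Icc a b) {e : ℕ → ℝ} (hes : range e ⊆ s) (hd : s ⊆ closure (range e)) :
    (⨆ n, f (e n)) = sSup (f '' s) := by
  have h1 : f '' range e = range (fun n => f (e n)) := by
    rw [← Set.range_comp]; rfl
  have := sSup_image_dense' hf hes hd (range_nonempty e) (bddAbove_image_Icc' hf hs)
  rw [h1] at this
  rw [← this]
  rfl

end StatWindowAux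

theorem stationary_window_difference_identity
    {Ω : Type*} [MeasurableSpace Ω] (P : Measure Ω) [IsProbabilityMeasure P]
    (X : Ω → ℝ → ℝ)
    (hCont : ∀ ω, Continuous (X ω))
    (hMeas : ∀ s : ℝ, Measurable (fun ω => X ω s))
    (hStat : ∀ t : ℝ,
      Measure.map (fun ω => fun s => X ω (s + t)) P = Measure.map (fun ω => X ω) P)
    (S st u : ℝ) (hS : 0 < S) (hst : st ∈ Set.Ioo 0 S)
    (h h' : ℝ) (hh : 0 < h) (hh' : 0 < h') (hsum : h + h' ≤ S - st) :
    (P {ω | u ≤ sSup (X ω '' Set.Icc (h + h') (st + (h + h'))) ∧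
        sSup (X ω '' (Set.Icc 0 S \ Set.Icc (h + h') (st + (h + h')))) < u}).toReal
      - (P {ω | u ≤ sSup (X ω '' Set.Icc h (st + h)) ∧
          sSup (X ω '' (Set.Icc 0 S \ Set.Icc h (st + h))) < u}).toReal
      = (P {ω | u ≤ sSup (X ω '' Set.Icc h (st + h)) ∧
            u ≤ sSup (X ω '' Set.Icc (S - h') S) ∧
            sSup (X ω '' (Set.Icc 0 (S - h') \ Set.Icc h (st + h))) < u}).toReal
        - (P {ω | u ≤ sSup (X ω '' Set.Icc h (st + h)) ∧
            u ≤ sSup (X ω '' Set.Icc (-h') 0) ∧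
            sSup (X ω '' (Set.Icc 0 (S - h') \ Set.Icc h (st + h))) < u}).toReal := by
  obtain ⟨hst0, hstS⟩ := hst
  -- basic numeric facts
  have h2 : st + h ≤ S - h' := by linarith
  have h3 : S - h' < S := by linarith
  have h4 : (0:ℝ) ≤ S - h' := by linarith
  have hneg : -h' < 0 := by linarith
  -- names for sets
  set I₁ : Set ℝ := Icc h (st + h) with hI₁
  set I₂ : Set ℝ := Icc (h + h') (st + (h + h')) with hI₂
  set D' : Set ℝ := Icc 0 (S - h') \ I₁ with hD'
  set T : Set ℝ := Icc (S - h') S with hT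
  set L : Set ℝ := Icc (-h') 0 with hL
  set DL : Set ℝ := Icc (-h') (S - h') \ I₁ with hDL
  -- subsets of universal bound [-h', S]
  have hI₁sub : I₁ ⊆ Icc (-h') S := Icc_subset_Icc (by linarith) (by linarith)
  have hI₂sub : I₂ ⊆ Icc (-h') S := Icc_subset_Icc (by linarith) (by linarith)
  have hD'sub : D' ⊆ Icc (-h') S :=
    (diff_subset.trans (Icc_subset_Icc (by linarith) (by linarith)))
  have hTsub : T ⊆ Icc (-h') S := Icc_subset_Icc (by linarith) le_rfl
  have hLsub : L ⊆ Icc (-h') S := Icc_subset_Icc le_rfl (by linarith)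
  have hDLsub : DL ⊆ Icc (-h') S :=
    (diff_subset.trans (Icc_subset_Icc le_rfl (by linarith)))
  have hDf1sub : (Icc 0 S \ I₁) ⊆ Icc (-h') S :=
    (diff_subset.trans (Icc_subset_Icc (by linarith) le_rfl))
  have hDf2sub : (Icc 0 S \ I₂) ⊆ Icc (-h') S :=
    (diff_subset.trans (Icc_subset_Icc (by linarith) le_rfl))
  have hIocsub : Ioc (S - h') S ⊆ Icc (-h') S := Ioc_subset_Icc_self.trans hTsub
  have hIcosub : Ico (-h') 0 ⊆ Icc (-h') S := Ico_subset_Icc_self.trans hLsub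
  -- nonemptiness
  have hI₁ne : I₁.Nonempty := nonempty_Icc.2 (by linarith)
  have hD'ne : D'.Nonempty := ⟨0, ⟨le_rfl, h4⟩, by simp [hI₁, mem_Icc]; intro; linarith⟩
  have hTne : T.Nonempty := nonempty_Icc.2 h3.le
  have hLne : L.Nonempty := nonempty_Icc.2 hneg.le
  have hDLne : DL.Nonempty := ⟨-h', ⟨le_rfl, by linarith⟩, by simp [hI₁, mem_Icc]; intro; linarith⟩
  have hIocne : (Ioc (S - h') S).Nonempty := nonempty_Ioc.2 h3
  have hIcone : (Ico (-h') 0).Nonempty := nonempty_Ico.2 hneg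
  -- bddAbove helper
  have bdd : ∀ (ω : Ω) (s : Set ℝ), s ⊆ Icc (-h') S → BddAbove (X ω '' s) :=
    fun ω s hs => bddAbove_image_Icc' (hCont ω) hs
  -- sup over half-open intervals equals sup over closed intervals
  have supIoc : ∀ ω, sSup (X ω '' Ioc (S - h') S) = sSup (X ω '' T) := fun ω =>
    sSup_image_dense' (hCont ω) Ioc_subset_Icc_self
      (by rw [closure_Ioc h3.ne]) hIocne (bdd ω T hTsub)
  have supIco : ∀ ω, sSup (X ω '' Ico (-h') 0) = sSup (X ω '' L) := fun ω =>
    sSup_image_dense' (hCont ω) Ico_subset_Icc_self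
      (by rw [closure_Ico hneg.ne]) hIcone (bdd ω L hLsub)
  -- set decompositions
  have S1 : Icc 0 S \ I₁ = D' ∪ Ioc (S - h') S := by
    rw [hD', hI₁]
    ext x
    simp only [mem_diff, mem_Icc, mem_union, mem_Ioc, not_and, not_le]
    constructor
    · rintro ⟨⟨hx0, hxS⟩, hni⟩
      rcases le_or_gt x (S - h') with hc | hc
      · exact Or.inl ⟨⟨hx0, hc⟩, hni⟩
      · exact Or.inr ⟨hc, hxS⟩
    · rintro (⟨⟨hx0, hxc⟩, hni⟩ | ⟨hc, hxS⟩)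
      · exact ⟨⟨hx0, by linarith⟩, hni⟩
      · exact ⟨⟨by linarith, hxS⟩, fun hx => by linarith⟩
  have S2 : DL = Ico (-h') 0 ∪ D' := by
    rw [hDL, hD', hI₁]
    ext x
    simp only [mem_diff, mem_Icc, mem_union, mem_Ico, not_and, not_le]
    constructor
    · rintro ⟨⟨hx0, hxS⟩, hni⟩
      rcases lt_or_ge x 0 with hc | hc
      · exact Or.inl ⟨hx0, hc⟩
      · exact Or.inr ⟨⟨hc, hxS⟩, hni⟩
    · rintro (⟨hx0, hc⟩ | ⟨⟨hx0, hxc⟩, hni⟩)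
      · exact ⟨⟨hx0, by linarith⟩, fun hx => by linarith⟩
      · exact ⟨⟨by linarith, hxc⟩, hni⟩
  -- main pointwise sup decompositions
  have decompA : ∀ ω, sSup (X ω '' (Icc 0 S \ I₁)) < u ↔
      (sSup (X ω '' D') < u ∧ sSup (X ω '' T) < u) := by
    intro ω
    rw [S1, sSup_image_union' hD'ne hIocne (bdd ω _ hD'sub) (bdd ω _ hIocsub), supIoc ω,
      sup_lt_iff]
  have decompC : ∀ ω, sSup (X ω '' DL) < u ↔
      (sSup (X ω '' L) < u ∧ sSup (X ω '' D') < u) := by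
    intro ω
    rw [S2, sSup_image_union' hIcone hD'ne (bdd ω _ hIcosub) (bdd ω _ hD'sub), supIco ω,
      sup_lt_iff]
  -- measurability of sup over T and L
  have measSup : ∀ (s : Set ℝ), s ⊆ Icc (-h') S → s.Nonempty →
      Measurable (fun ω => sSup (X ω '' s)) := by
    intro s hsub hne
    obtain ⟨e, hes, hd⟩ := exists_dense_seq' hsub hne
    have : (fun ω => sSup (X ω '' s)) = fun ω => ⨆ n, X ω (e n) :=
      funext fun ω => (iSup_eq_sSup_image' (hCont ω) hsub hes hd).symm
    rw [this]
    exact Measurable.iSup (fun n => hMeas (e n))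
  -- events
  set E1 : Set Ω := {ω | u ≤ sSup (X ω '' I₁) ∧ sSup (X ω '' D') < u} with hE1
  set CT : Set Ω := {ω | sSup (X ω '' T) < u} with hCT
  set CL : Set Ω := {ω | sSup (X ω '' L) < u} with hCL
  have hCTm : MeasurableSet CT := measurableSet_lt (measSup T hTsub hTne) measurable_const
  have hCLm : MeasurableSet CL := measurableSet_lt (measSup L hLsub hLne) measurable_const
  -- identify the goal events
  have id_muh : {ω | u ≤ sSup (X ω '' I₁) ∧ sSup (X ω '' (Icc 0 S \ I₁)) < u} = E1 ∩ CT := by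
    ext ω
    simp only [hE1, hCT, mem_setOf_eq, mem_inter_iff, decompA ω]
    tauto
  have id_R1 : {ω | u ≤ sSup (X ω '' I₁) ∧ u ≤ sSup (X ω '' T) ∧ sSup (X ω '' D') < u}
      = E1 \ CT := by
    ext ω
    simp only [hE1, hCT, mem_setOf_eq, mem_diff, not_lt]
    tauto
  have id_EL : {ω | u ≤ sSup (X ω '' I₁) ∧ sSup (X ω '' DL) < u} = E1 ∩ CL := by
    ext ω
    simp only [hE1, hCL, mem_setOf_eq, mem_inter_iff, decompC ω]
    tauto
  have id_R2 : {ω | u ≤ sSup (X ω '' I₁) ∧ u ≤ sSup (X ω '' L) ∧ sSup (X ω '' D') < u}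
      = E1 \ CL := by
    ext ω
    simp only [hE1, hCL, mem_setOf_eq, mem_diff, not_lt]
    tauto
  -- stationarity step
  have stat : P {ω | u ≤ sSup (X ω '' I₂) ∧ sSup (X ω '' (Icc 0 S \ I₂)) < u}
      = P {ω | u ≤ sSup (X ω '' I₁) ∧ sSup (X ω '' DL) < u} := by
    obtain ⟨eI, heIs, heId⟩ := exists_dense_seq' hI₁sub hI₁ne
    obtain ⟨eD, heDs, heDd⟩ := exists_dense_seq' hDLsub hDLne
    set M : Set (ℝ → ℝ) := {f | u ≤ ⨆ n, f (eI n) ∧ (⨆ n, f (eD n)) < u} with hM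
    have hg1 : Measurable (fun f : ℝ → ℝ => ⨆ n, f (eI n)) :=
      Measurable.iSup (fun n => measurable_pi_apply (eI n))
    have hg2 : Measurable (fun f : ℝ → ℝ => ⨆ n, f (eD n)) :=
      Measurable.iSup (fun n => measurable_pi_apply (eD n))
    have hMm : MeasurableSet M := by
      have : M = {f : ℝ → ℝ | u ≤ ⨆ n, f (eI n)} ∩ {f | (⨆ n, f (eD n)) < u} := rfl
      rw [this]
      exact (measurableSet_le measurable_const hg1).inter (measurableSet_lt hg2 measurable_const)
    have hmap1 : Measurable (fun ω => X ω) := measurable_pi_lambda _ hMeas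
    have hmap2 : Measurable (fun ω => fun s => X ω (s + h')) :=
      measurable_pi_lambda _ (fun s => hMeas (s + h'))
    have key := congrArg (fun μ : Measure (ℝ → ℝ) => μ M) (hStat h')
    simp only [Measure.map_apply hmap2 hMm, Measure.map_apply hmap1 hMm] at key
    -- identify preimages
    -- translated sequences are dense in the translated sets
    have hshiftI : range (fun n => eI n + h') ⊆ I₂ ∧ I₂ ⊆ closure (range (fun n => eI n + h')) := by
      have him : (fun x : ℝ => x + h') '' I₁ = I₂ := by
        rw [hI₁, hI₂, img_add_Icc']
        congr 1
        ring
      have hr : range (fun n => eI n + h') = (fun x : ℝ => x + h') '' range eI := by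
        rw [← Set.range_comp]; rfl
      constructor
      · rw [hr, ← him]; exact image_mono (f := fun x : ℝ => x + h') heIs
      · rw [hr, ← him]
        intro x hx
        exact (image_closure_subset_closure_image (continuous_add_right h'))
          (image_mono (f := fun x : ℝ => x + h') heId hx)
    have hDL2 : (fun x : ℝ => x + h') '' DL = Icc 0 S \ I₂ := by
      have e1 : -h' + h' = (0:ℝ) := by ring
      have e2 : S - h' + h' = S := by ring
      have e3 : h + h' + (st + h + h' - (h + h')) = st + h + h' := by ring
      rw [hDL, hI₁, hI₂, image_diff (add_left_injective h'), img_add_Icc', img_add_Icc',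
        e1, e2]
      have e4 : st + h + h' = st + (h + h') := by ring
      rw [e4]
    have hshiftD : range (fun n => eD n + h') ⊆ Icc 0 S \ I₂ ∧
        Icc 0 S \ I₂ ⊆ closure (range (fun n => eD n + h')) := by
      have hr : range (fun n => eD n + h') = (fun x : ℝ => x + h') '' range eD := by
        rw [← Set.range_comp]; rfl
      constructor
      · rw [hr, ← hDL2]; exact image_mono (f := fun x : ℝ => x + h') heDs
      · rw [hr, ← hDL2]
        intro x hx
        exact (image_closure_subset_closure_image (continuous_add_right h'))
          (image_mono (f := fun x : ℝ => x + h') heDd hx)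
    have pre1 : (fun ω => X ω) ⁻¹' M
        = {ω | u ≤ sSup (X ω '' I₁) ∧ sSup (X ω '' DL) < u} := by
      ext ω
      simp only [hM, mem_preimage, mem_setOf_eq,
        iSup_eq_sSup_image' (hCont ω) hI₁sub heIs heId,
        iSup_eq_sSup_image' (hCont ω) hDLsub heDs heDd]
    have pre2 : (fun ω => fun s => X ω (s + h')) ⁻¹' M
        = {ω | u ≤ sSup (X ω '' I₂) ∧ sSup (X ω '' (Icc 0 S \ I₂)) < u} := by
      ext ω
      simp only [hM, mem_preimage, mem_setOf_eq]
      rw [iSup_eq_sSup_image' (hCont ω) hI₂sub hshiftI.1 hshiftI.2,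
        iSup_eq_sSup_image' (hCont ω) hDf2sub hshiftD.1 hshiftD.2]
    rw [pre1, pre2] at key
    exact key
  -- measure decompositions
  have split1 : P (E1 ∩ CT) + P (E1 \ CT) = P E1 := measure_inter_add_diff E1 hCTm
  have split2 : P (E1 ∩ CL) + P (E1 \ CL) = P E1 := measure_inter_add_diff E1 hCLm
  -- rewrite the goal
  rw [id_muh, id_R1, id_R2, stat, id_EL]
  -- finish with toReal arithmetic
  have f1 : P (E1 ∩ CT) ≠ ⊤ := measure_ne_top P _
  have f2 : P (E1 \ CT) ≠ ⊤ := measure_ne_top P _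
  have f3 : P (E1 ∩ CL) ≠ ⊤ := measure_ne_top P _
  have f4 : P (E1 \ CL) ≠ ⊤ := measure_ne_top P _
  have t1 : (P (E1 ∩ CT)).toReal + (P (E1 \ CT)).toReal = (P E1).toReal := by
    rw [← ENNReal.toReal_add f1 f2, split1]
  have t2 : (P (E1 ∩ CL)).toReal + (P (E1 \ CL)).toReal = (P E1).toReal := by
    rw [← ENNReal.toReal_add f3 f4, split2]
  linarith
end
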